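/- Let g : ℝ → ℝ be C⁴ on a neighborhood of [T−h₀, T] for some h₀ > 0. Then there exists C > 0 such that for all 0 < h ≤ h₀, |g(T−h) − ( g(T) − h·g'(T) + (h²/2)·( (2/3)·g''(T) + (1/3)·g''(T−h) ) )| ≤ C·h⁴. -/

import Mathlib

open Set

/-- On a set with unique differentiability, if all lower iterated derivatives of `f`
are (globally) differentiable at points of the set, the iterated derivative within the set
coincides with the global one. -/
lemma iteratedDerivWithin_eq_iteratedDeriv_aux (n : ℕ) (f : ℝ → ℝ) (s : Set ℝ)
    (hs : UniqueDiffOn ℝ s)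
    (hd : ∀ m, m < n → ∀ x ∈ s, DifferentiableAt ℝ (iteratedDeriv m f) x) :
    ∀ x ∈ s, iteratedDerivWithin n f s x = iteratedDeriv n f x := by
  induction n with
  | zero => intro x hx; simp [iteratedDerivWithin_zero, iteratedDeriv_zero]
  | succ n IH =>
    intro x hx
    have IH' := IH (fun m hm => hd m (hm.trans n.lt_succ_self))
    rw [iteratedDerivWithin_succ,
      derivWithin_congr (fun y hy => IH' y hy) (IH' x hx), iteratedDeriv_succ]
    exact (hd n n.lt_succ_self x hx).derivWithin (hs x hx)

/-- The two-stage multi-derivative backward formula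
`g(T−h) ≈ g(T) − h g'(T) + (h²/2)((2/3) g''(T) + (1/3) g''(T−h))`
is locally fourth-order accurate for `g` that is `C⁴` on a neighborhood of `[T−h₀, T]`. -/
theorem two_stage_multiderivative_backward_formula
    (g : ℝ → ℝ) (T h₀ : ℝ) (hh₀ : 0 < h₀)
    (U : Set ℝ) (hU : IsOpen U) (hUsub : Set.Icc (T - h₀) T ⊆ U)
    (hg : ContDiffOn ℝ 4 g U) :
    ∃ C > 0, ∀ h : ℝ, 0 < h → h ≤ h₀ →
      |g (T - h) -
          (g T - h * deriv g T +
            h ^ 2 / 2 * (2 / 3 * deriv (deriv g) T + 1 / 3 * deriv (deriv g) (T - h)))|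
        ≤ C * h ^ 4 := by
  set g1 := deriv g with hg1def
  set g2 := deriv g1 with hg2def
  set g3 := deriv g2 with hg3def
  set g4 := deriv g3 with hg4def
  -- regularity of the successive derivatives on U
  have hg1 : ContDiffOn ℝ 3 g1 U := hg.deriv_of_isOpen hU (by norm_num)
  have hg2 : ContDiffOn ℝ 2 g2 U := hg1.deriv_of_isOpen hU (by norm_num)
  have hg3 : ContDiffOn ℝ 1 g3 U := hg2.deriv_of_isOpen hU (by norm_num)
  have hg4c : ContinuousOn g4 U := hg3.continuousOn_deriv_of_isOpen hU (le_refl _)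
  -- bound for g4 on the compact interval
  obtain ⟨M, hM⟩ := (isCompact_Icc (a := T - h₀) (b := T)).exists_bound_of_continuousOn
    (hg4c.mono hUsub)
  have hM0 : 0 ≤ M := le_trans (norm_nonneg _) (hM T ⟨by linarith, le_refl _⟩)
  refine ⟨M / 8 + 1, by positivity, ?_⟩
  intro h hh hhh₀
  -- the reflected functions
  set G : ℝ → ℝ := fun s => g (T - s) with hGdef
  set H : ℝ → ℝ := fun s => g2 (T - s) with hHdef
  have hmem : ∀ s ∈ Icc (0:ℝ) h, T - s ∈ U := fun s hs =>
    hUsub ⟨by simp at hs; linarith, by simp at hs; linarith⟩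
  -- closed forms for iterated derivatives of G
  have eG1 : deriv G = fun s => -g1 (T - s) := funext fun s => deriv_comp_const_sub g T s
  have eG2 : iteratedDeriv 2 G = fun s => g2 (T - s) := by
    rw [iteratedDeriv_succ, iteratedDeriv_one, eG1]
    funext s
    rw [deriv.fun_neg, deriv_comp_const_sub g1 T s, neg_neg]
  have eG3 : iteratedDeriv 3 G = fun s => -g3 (T - s) := by
    rw [iteratedDeriv_succ, eG2]
    funext s
    rw [deriv_comp_const_sub g2 T s]
  have eG4 : iteratedDeriv 4 G = fun s => g4 (T - s) := by
    rw [iteratedDeriv_succ, eG3]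
    funext s
    rw [deriv.fun_neg, deriv_comp_const_sub g3 T s, neg_neg]
  have eH1 : deriv H = fun s => -g3 (T - s) := funext fun s => deriv_comp_const_sub g2 T s
  have eH2 : iteratedDeriv 2 H = fun s => g4 (T - s) := by
    rw [iteratedDeriv_succ, iteratedDeriv_one, eH1]
    funext s
    rw [deriv.fun_neg, deriv_comp_const_sub g3 T s, neg_neg]
  -- differentiability of outer derivatives at relevant points
  have href : ∀ s : ℝ, DifferentiableAt ℝ (fun t : ℝ => T - t) s := fun s =>
    (differentiableAt_const T).sub differentiableAt_id
  have hdG : ∀ m, m < 4 → ∀ x ∈ Icc (0:ℝ) h, DifferentiableAt ℝ (iteratedDeriv m G) x := by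
    intro m hm x hx
    have hxU : T - x ∈ U := hmem x hx
    interval_cases m
    · rw [iteratedDeriv_zero]
      exact ((hg.differentiableOn (by norm_num)).differentiableAt (hU.mem_nhds hxU)).comp x
        (href x)
    · rw [iteratedDeriv_one, eG1]
      exact (((hg1.differentiableOn (by norm_num)).differentiableAt
        (hU.mem_nhds hxU)).comp x (href x)).neg
    · rw [eG2]
      exact ((hg2.differentiableOn (by norm_num)).differentiableAt (hU.mem_nhds hxU)).comp x
        (href x)
    · rw [eG3]
      exact (((hg3.differentiableOn (by norm_num)).differentiableAt
        (hU.mem_nhds hxU)).comp x (href x)).neg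
  have hdH : ∀ m, m < 2 → ∀ x ∈ Icc (0:ℝ) h, DifferentiableAt ℝ (iteratedDeriv m H) x := by
    intro m hm x hx
    have hxU : T - x ∈ U := hmem x hx
    interval_cases m
    · rw [iteratedDeriv_zero]
      exact ((hg2.differentiableOn (by norm_num)).differentiableAt (hU.mem_nhds hxU)).comp x
        (href x)
    · rw [iteratedDeriv_one, eH1]
      exact (((hg3.differentiableOn (by norm_num)).differentiableAt
        (hU.mem_nhds hxU)).comp x (href x)).neg
  have hud : UniqueDiffOn ℝ (Icc (0:ℝ) h) := uniqueDiffOn_Icc hh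
  have hGW : ∀ n : ℕ, n ≤ 4 → ∀ x ∈ Icc (0:ℝ) h,
      iteratedDerivWithin n G (Icc 0 h) x = iteratedDeriv n G x := fun n hn =>
    iteratedDerivWithin_eq_iteratedDeriv_aux n G _ hud
      (fun m hm => hdG m (lt_of_lt_of_le hm hn))
  have hHW : ∀ n : ℕ, n ≤ 2 → ∀ x ∈ Icc (0:ℝ) h,
      iteratedDerivWithin n H (Icc 0 h) x = iteratedDeriv n H x := fun n hn =>
    iteratedDerivWithin_eq_iteratedDeriv_aux n H _ hud
      (fun m hm => hdH m (lt_of_lt_of_le hm hn))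
  -- ContDiffOn hypotheses for Taylor's theorem
  have hGC : ContDiffOn ℝ 4 G (Icc 0 h) := by
    have : ContDiffOn ℝ 4 (fun s : ℝ => T - s) (Icc 0 h) :=
      (contDiff_const.sub contDiff_id).contDiffOn
    exact hg.comp this hmem
  have hHC : ContDiffOn ℝ 2 H (Icc 0 h) := by
    have : ContDiffOn ℝ 2 (fun s : ℝ => T - s) (Icc 0 h) :=
      (contDiff_const.sub contDiff_id).contDiffOn
    exact hg2.comp this hmem
  -- first Taylor expansion : G at order 3
  obtain ⟨ξ, hξ, hTay1⟩ := taylor_mean_remainder_lagrange (n := 3) hh.ne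
    (by rw [Set.uIcc_of_le hh.le]; exact hGC.of_le (by norm_num))
    (by
      rw [Set.uIcc_of_le hh.le, uIoo_of_le hh.le]
      refine (DifferentiableOn.congr ?_ fun x hx =>
        hGW 3 (by norm_num) x (Ioo_subset_Icc_self hx)).mono (le_refl _)
      intro x hx
      exact (hdG 3 (by norm_num) x (Ioo_subset_Icc_self hx)).differentiableWithinAt)
  -- second Taylor expansion : H at order 1
  obtain ⟨ζ, hζ, hTay2⟩ := taylor_mean_remainder_lagrange (n := 1) hh.ne
    (by rw [Set.uIcc_of_le hh.le]; exact hHC.of_le (by norm_num))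
    (by
      rw [Set.uIcc_of_le hh.le, uIoo_of_le hh.le]
      refine (DifferentiableOn.congr ?_ fun x hx =>
        hHW 1 (by norm_num) x (Ioo_subset_Icc_self hx)).mono (le_refl _)
      intro x hx
      exact (hdH 1 (by norm_num) x (Ioo_subset_Icc_self hx)).differentiableWithinAt)
  rw [Set.uIcc_of_le hh.le] at hTay1 hTay2
  rw [uIoo_of_le hh.le] at hξ hζ
  have h0mem : (0:ℝ) ∈ Icc (0:ℝ) h := ⟨le_refl _, le_of_lt hh⟩
  have hξmem : ξ ∈ Icc (0:ℝ) h := Ioo_subset_Icc_self hξ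
  have hζmem : ζ ∈ Icc (0:ℝ) h := Ioo_subset_Icc_self hζ
  -- rewrite the Taylor polynomials
  rw [taylor_within_apply] at hTay1 hTay2
  simp only [Finset.sum_range_succ, Finset.sum_range_zero] at hTay1 hTay2
  rw [hGW 0 (by norm_num) 0 h0mem, hGW 1 (by norm_num) 0 h0mem,
    hGW 2 (by norm_num) 0 h0mem, hGW 3 (by norm_num) 0 h0mem,
    hGW 4 (by norm_num) ξ hξmem] at hTay1
  rw [hHW 0 (by norm_num) 0 h0mem, hHW 1 (by norm_num) 0 h0mem,
    hHW 2 (by norm_num) ζ hζmem] at hTay2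
  rw [iteratedDeriv_zero, iteratedDeriv_one, eG1, eG2, eG3, eG4] at hTay1
  rw [iteratedDeriv_zero, iteratedDeriv_one, eH1, eH2] at hTay2
  simp only [sub_zero, smul_eq_mul] at hTay1 hTay2
  -- abbreviations for the two fourth-derivative values
  set A := g4 (T - ξ) with hA
  set B := g4 (T - ζ) with hB
  have hAle : |A| ≤ M := hM (T - ξ) ⟨by obtain ⟨h1, h2⟩ := hξ; linarith,
    by obtain ⟨h1, h2⟩ := hξ; linarith⟩
  have hBle : |B| ≤ M := hM (T - ζ) ⟨by obtain ⟨h1, h2⟩ := hζ; linarith,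
    by obtain ⟨h1, h2⟩ := hζ; linarith⟩
  -- turn the Taylor identities into usable equations
  have hG0 : G 0 = g T := by show g (T - 0) = g T; rw [sub_zero]
  have hH0 : H 0 = g2 T := by show g2 (T - 0) = g2 T; rw [sub_zero]
  have hGh : G h = g T - h * g1 T + h ^ 2 / 2 * g2 T - h ^ 3 / 6 * g3 T + A * h ^ 4 / 24 := by
    have := hTay1
    simp only [Nat.factorial] at this
    rw [hG0] at this
    push_cast at this
    linarith [this]
  have hHh : H h = g2 T - h * g3 T + B * h ^ 2 / 2 := by
    have := hTay2
    simp only [Nat.factorial] at this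
    rw [hH0] at this
    push_cast at this
    linarith [this]
  have hG : g (T - h) = G h := rfl
  have hH : deriv (deriv g) (T - h) = H h := rfl
  have hkey : g (T - h) -
      (g T - h * deriv g T +
        h ^ 2 / 2 * (2 / 3 * deriv (deriv g) T + 1 / 3 * deriv (deriv g) (T - h)))
      = A * h ^ 4 / 24 - B * h ^ 4 / 12 := by
    rw [hG, hH, hGh, hHh]
    ring
  rw [hkey]
  have habs : |A * h ^ 4 / 24 - B * h ^ 4 / 12| ≤ M / 8 * h ^ 4 := by
    have h4 : (0:ℝ) ≤ h ^ 4 := by positivity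
    calc |A * h ^ 4 / 24 - B * h ^ 4 / 12|
        ≤ |A * h ^ 4 / 24| + |B * h ^ 4 / 12| := abs_sub _ _
      _ = |A| * h ^ 4 / 24 + |B| * h ^ 4 / 12 := by
          rw [abs_div, abs_div, abs_mul, abs_mul, abs_pow, abs_of_pos hh]
          norm_num
      _ ≤ M * h ^ 4 / 24 + M * h ^ 4 / 12 := by
          have := mul_le_mul_of_nonneg_right hAle h4
          have := mul_le_mul_of_nonneg_right hBle h4
          nlinarith
      _ = M / 8 * h ^ 4 := by ring
  calc |A * h ^ 4 / 24 - B * h ^ 4 / 12| ≤ M / 8 * h ^ 4 := habs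
    _ ≤ (M / 8 + 1) * h ^ 4 := by nlinarith [pow_pos hh 4]
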